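/- Let f : (ℕ→ℕ) → Set (ℕ→ℕ) be a problem, and suppose there exist a point a and a sequence (a_n) in Baire space with a_n → a, such that a ∈ dom f, a_n ∈ dom f for every n, and the restriction of f to S = {a_n | n ∈ ℕ} ∪ {a} is discontinuous (there is no F : (ℕ→ℕ) → (ℕ→ℕ) continuous on S with F x ∈ f x for all x ∈ S). Then ACC_ℕ ≤_W* f. -/
import Mathlib


/-- The domain of a problem (multivalued function on Baire space). -/
def domP (f : (ℕ → ℕ) → Set (ℕ → ℕ)) : Set (ℕ → ℕ) := {p | f p ≠ ∅}

/-- The domain of a first-order problem. -/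
def domFO (f : (ℕ → ℕ) → Set ℕ) : Set (ℕ → ℕ) := {p | f p ≠ ∅}

/-- The problem `ACC_ℕ`. -/
def ACCN (p : ℕ → ℕ) : Set ℕ :=
  {n | (∀ i j, p i ≠ 0 → p j ≠ 0 → p i = p j) ∧ ∀ k, p k ≠ n + 1}

/-- Continuous Weihrauch reducibility of a first-order problem `g` to a problem `f`. -/
def RedFO (g : (ℕ → ℕ) → Set ℕ) (f : (ℕ → ℕ) → Set (ℕ → ℕ)) : Prop :=
  ∃ (H : (ℕ → ℕ) → (ℕ → ℕ)) (K : (ℕ → ℕ) × (ℕ → ℕ) → ℕ),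
    ContinuousOn H (domFO g) ∧
    ContinuousOn K {pq : (ℕ → ℕ) × (ℕ → ℕ) | pq.1 ∈ domFO g ∧ pq.2 ∈ f (H pq.1)} ∧
    (∀ p ∈ domFO g, H p ∈ domP f) ∧
    (∀ p ∈ domFO g, ∀ q ∈ f (H p), K (p, q) ∈ g p)


open scoped Classical

lemma cylOpen (x : ℕ → ℕ) (n : ℕ) : IsOpen {y : ℕ → ℕ | ∀ i < n, y i = x i} := by
  have h : {y : ℕ → ℕ | ∀ i < n, y i = x i}
      = ⋂ i ∈ Finset.range n, (fun y : ℕ → ℕ => y i) ⁻¹' {x i} := by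
    ext y; simp
  rw [h]
  exact isOpen_biInter_finset fun i _ => (continuous_apply i).isOpen_preimage _ (isOpen_discrete _)

lemma cylMemNhds (x : ℕ → ℕ) (n : ℕ) : {y : ℕ → ℕ | ∀ i < n, y i = x i} ∈ nhds x :=
  (cylOpen x n).mem_nhds (by simp)

lemma cwa_baire {F : (ℕ → ℕ) → (ℕ → ℕ)} {s : Set (ℕ → ℕ)} {x : ℕ → ℕ}
    (h : ∀ M, ∃ m, ∀ y ∈ s, (∀ i < m, y i = x i) → ∀ j < M, F y j = F x j) :
    ContinuousWithinAt F s x := by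
  rw [ContinuousWithinAt, tendsto_pi_nhds]
  intro j
  obtain ⟨m, hm⟩ := h (j + 1)
  apply tendsto_nhds_of_eventually_eq
  filter_upwards [nhdsWithin_le_nhds (cylMemNhds x m), self_mem_nhdsWithin] with y h1 h2
  exact hm y h2 h1 j (Nat.lt_succ_self j)

lemma cwa_nat {K : (ℕ → ℕ) × (ℕ → ℕ) → ℕ} {s : Set ((ℕ → ℕ) × (ℕ → ℕ))} {z : (ℕ → ℕ) × (ℕ → ℕ)}
    (h : ∃ m, ∀ w : (ℕ → ℕ) × (ℕ → ℕ),
      (∀ i < m, w.1 i = z.1 i) → (∀ i < m, w.2 i = z.2 i) → K w = K z) :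
    ContinuousWithinAt K s z := by
  obtain ⟨m, hm⟩ := h
  apply ContinuousAt.continuousWithinAt
  apply tendsto_nhds_of_eventually_eq
  rw [nhds_prod_eq]
  filter_upwards [Filter.prod_mem_prod (cylMemNhds z.1 m) (cylMemNhds z.2 m)] with w hw
  exact hm w hw.1 hw.2

/-- the "bad prefix" predicate: arbitrarily close to `a` there are points of the
sequence on which every solution differs from `q` below `m`. -/
def Pb (f : (ℕ → ℕ) → Set (ℕ → ℕ)) (a : ℕ → ℕ) (aseq : ℕ → ℕ → ℕ) (q : ℕ → ℕ) (m : ℕ) : Prop :=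
  ∀ N, ∃ n, (∀ i < N, aseq n i = a i) ∧ ∀ r ∈ f (aseq n), ∃ i, i < m ∧ r i ≠ q i

def lenOf (c : ℕ) : ℕ := ((Encodable.decode (α := List ℕ) c).getD []).length
def valOf (c : ℕ) (i : ℕ) : ℕ := ((Encodable.decode (α := List ℕ) c).getD []).getD i 0
def encP (q : ℕ → ℕ) (m : ℕ) : ℕ := Encodable.encode ((List.range m).map q)

def PbL (f : (ℕ → ℕ) → Set (ℕ → ℕ)) (a : ℕ → ℕ) (aseq : ℕ → ℕ → ℕ) (c : ℕ) : Prop :=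
  ∀ N, ∃ n, (∀ i < N, aseq n i = a i) ∧ ∀ r ∈ f (aseq n), ∃ i, i < lenOf c ∧ r i ≠ valOf c i

lemma lenOf_encP (q : ℕ → ℕ) (m : ℕ) : lenOf (encP q m) = m := by
  simp [lenOf, encP, Encodable.encodek]

lemma valOf_encP (q : ℕ → ℕ) {m i : ℕ} (h : i < m) : valOf (encP q m) i = q i := by
  have h1 : ((List.range m).map q).getD i 0 = q i := by
    rw [List.getD_eq_getElem _ _ (by simpa using h)]
    simp
  simpa [valOf, encP, Encodable.encodek] using h1

lemma encP_congr {q q' : ℕ → ℕ} {m : ℕ} (h : ∀ i < m, q' i = q i) : encP q' m = encP q m := by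
  unfold encP
  congr 1
  apply List.ext_getElem (by simp)
  intro i h1 h2
  simp only [List.getElem_map, List.getElem_range] at *
  exact h i (by simpa using h1)

lemma PbL_encP {f : (ℕ → ℕ) → Set (ℕ → ℕ)} {a : ℕ → ℕ} {aseq : ℕ → ℕ → ℕ} {q : ℕ → ℕ} {m : ℕ} :
    PbL f a aseq (encP q m) ↔ Pb f a aseq q m := by
  constructor
  · intro h N
    obtain ⟨n, h1, h2⟩ := h N
    refine ⟨n, h1, fun r hr => ?_⟩
    obtain ⟨i, hi, hne⟩ := h2 r hr
    rw [lenOf_encP] at hi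
    exact ⟨i, hi, by rwa [valOf_encP q hi] at hne⟩
  · intro h N
    obtain ⟨n, h1, h2⟩ := h N
    refine ⟨n, h1, fun r hr => ?_⟩
    obtain ⟨i, hi, hne⟩ := h2 r hr
    refine ⟨i, by rwa [lenOf_encP], by rwa [valOf_encP q hi]⟩

noncomputable def pickX (f : (ℕ → ℕ) → Set (ℕ → ℕ)) (a : ℕ → ℕ) (aseq : ℕ → ℕ → ℕ)
    (t c : ℕ) : ℕ → ℕ :=
  if h : ∃ n, (∀ i < t + 1, aseq n i = a i) ∧
      ∀ r ∈ f (aseq n), ∃ i, i < lenOf c ∧ r i ≠ valOf c i then aseq h.choose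
  else if h2 : ∃ n, ∀ i < t + 1, aseq n i = a i then aseq h2.choose
  else a

lemma pickX_agree (f : (ℕ → ℕ) → Set (ℕ → ℕ)) (a : ℕ → ℕ) (aseq : ℕ → ℕ → ℕ) (t c : ℕ) :
    ∀ i < t + 1, pickX f a aseq t c i = a i := by
  unfold pickX
  split_ifs with h h2
  · exact h.choose_spec.1
  · exact h2.choose_spec
  · intro i _; rfl

lemma pickX_spec {f : (ℕ → ℕ) → Set (ℕ → ℕ)} {a : ℕ → ℕ} {aseq : ℕ → ℕ → ℕ} {t c : ℕ}
    (h : PbL f a aseq c) : ∀ r ∈ f (pickX f a aseq t c), ∃ i, i < lenOf c ∧ r i ≠ valOf c i := by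
  have hex : ∃ n, (∀ i < t + 1, aseq n i = a i) ∧
      ∀ r ∈ f (aseq n), ∃ i, i < lenOf c ∧ r i ≠ valOf c i := h (t + 1)
  unfold pickX
  rw [dif_pos hex]
  exact hex.choose_spec.2

lemma pickX_mem {f : (ℕ → ℕ) → Set (ℕ → ℕ)} {a : ℕ → ℕ} {aseq : ℕ → ℕ → ℕ}
    (ha : f a ≠ ∅) (han : ∀ n, f (aseq n) ≠ ∅) (t c : ℕ) : f (pickX f a aseq t c) ≠ ∅ := by
  unfold pickX
  split_ifs with h h2
  · exact han _
  · exact han _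
  · exact ha

noncomputable def HH (f : (ℕ → ℕ) → Set (ℕ → ℕ)) (a : ℕ → ℕ) (aseq : ℕ → ℕ → ℕ)
    (p : ℕ → ℕ) : ℕ → ℕ :=
  if h : ∃ t, p t ≠ 0 then pickX f a aseq (Nat.find h) (p (Nat.find h) - 1) else a

noncomputable def KK (f : (ℕ → ℕ) → Set (ℕ → ℕ)) (a : ℕ → ℕ) (aseq : ℕ → ℕ → ℕ)
    (w : (ℕ → ℕ) × (ℕ → ℕ)) : ℕ :=
  if h : ∃ m, PbL f a aseq (encP w.2 m) ∨ ∃ t, t < m ∧ w.1 t ≠ 0 then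
    if PbL f a aseq (encP w.2 (Nat.find h)) then encP w.2 (Nat.find h)
    else if h2 : ∃ t, w.1 t ≠ 0 then w.1 (Nat.find h2) else 0
  else 0

lemma mem_domFO_ACCN {p : ℕ → ℕ} :
    p ∈ domFO ACCN ↔ ∀ i j, p i ≠ 0 → p j ≠ 0 → p i = p j := by
  constructor
  · intro h
    obtain ⟨n, hn⟩ := Set.nonempty_iff_ne_empty.mpr h
    exact hn.1
  · intro h
    apply Set.nonempty_iff_ne_empty.mp
    by_cases hz : ∃ k, p k ≠ 0
    · obtain ⟨k0, hk0⟩ := hz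
      refine ⟨p k0, h, fun k hk => ?_⟩
      by_cases hpk : p k = 0
      · omega
      · have := h k k0 hpk hk0; omega
    · push_neg at hz
      exact ⟨0, h, fun k => by rw [hz k]; omega⟩

lemma key_lemma (f : (ℕ → ℕ) → Set (ℕ → ℕ)) (a : ℕ → ℕ) (aseq : ℕ → (ℕ → ℕ))
    (hconv : Filter.Tendsto aseq Filter.atTop (nhds a))
    (ha : a ∈ {p | f p ≠ ∅}) (han : ∀ n, aseq n ∈ {p | f p ≠ ∅})
    (hdisc : ¬ ∃ F : (ℕ → ℕ) → (ℕ → ℕ),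
        ContinuousOn F (Set.range aseq ∪ {a}) ∧
        ∀ x ∈ Set.range aseq ∪ {a}, F x ∈ f x) :
    ∀ q ∈ f a, ∃ m, Pb f a aseq q m := by
  intro q hq
  by_contra hbad
  push_neg at hbad
  have hbad' : ∀ m, ∃ N, ∀ n, (∀ i < N, aseq n i = a i) →
      ∃ r ∈ f (aseq n), ∀ i < m, r i = q i := by
    intro m
    have h := hbad m
    unfold Pb at h
    push_neg at h
    obtain ⟨N, hN⟩ := h
    exact ⟨N, fun n hn => by
      obtain ⟨r, hr1, hr2⟩ := hN n hn
      exact ⟨r, hr1, fun i hi => hr2 i hi⟩⟩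
  choose N0 hN0 using hbad'
  set Nm : ℕ → ℕ := fun m => (Finset.range (m + 1)).sup N0 + m + 1 with hNmdef
  have hNmono : ∀ {m m'}, m ≤ m' → Nm m ≤ Nm m' := by
    intro m m' h
    have h1 : (Finset.range (m + 1)).sup N0 ≤ (Finset.range (m' + 1)).sup N0 :=
      Finset.sup_mono (Finset.range_subset_range.mpr (by omega))
    simp only [hNmdef]; omega
  have hNgt : ∀ m, m < Nm m := fun m => by simp only [hNmdef]; omega
  have hNmApp : ∀ m n, (∀ i < Nm m, aseq n i = a i) →
      ∃ r ∈ f (aseq n), ∀ i < m, r i = q i := by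
    intro m n h
    apply hN0 m n
    intro i hi
    apply h i
    have : N0 m ≤ (Finset.range (m + 1)).sup N0 := Finset.le_sup (Finset.self_mem_range_succ m)
    simp only [hNmdef]; omega
  -- the choice function
  set F : (ℕ → ℕ) → (ℕ → ℕ) := fun x =>
    if hx : ∃ m, ¬ ∀ i < Nm m, x i = a i then
      (if hne : (f x ∩ {r | ∀ i < Nat.find hx - 1, r i = q i}).Nonempty then hne.some else a)
    else q with hFdef
  have hxa : ∀ x : ℕ → ℕ, x ≠ a → ∃ m, ¬ ∀ i < Nm m, x i = a i := by
    intro x hx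
    obtain ⟨k, hk⟩ := Function.ne_iff.mp hx
    exact ⟨k, fun hall => hk (hall k (hNgt k))⟩
  have hFa : F a = q := by
    simp only [hFdef]
    rw [dif_neg]
    push_neg
    exact fun m i _ => trivial
  have hFx : ∀ (x : ℕ → ℕ) (h1 : x ≠ a), (∃ n, aseq n = x) →
      ∀ (hx : ∃ m, ¬ ∀ i < Nm m, x i = a i),
        F x ∈ f x ∧ ∀ i < Nat.find hx - 1, F x i = q i := by
    intro x h1 h2 hx
    have hne : (f x ∩ {r | ∀ i < Nat.find hx - 1, r i = q i}).Nonempty := by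
      rcases Nat.eq_zero_or_pos (Nat.find hx) with h0 | hpos
      · obtain ⟨n, rfl⟩ := h2
        obtain ⟨r, hr⟩ := Set.nonempty_iff_ne_empty.mpr (han n)
        exact ⟨r, hr, by intro i hi; omega⟩
      · obtain ⟨n, rfl⟩ := h2
        have hagree : ∀ i < Nm (Nat.find hx - 1), aseq n i = a i :=
          not_not.mp (Nat.find_min hx (by omega))
        obtain ⟨r, hr, hpref⟩ := hNmApp (Nat.find hx - 1) n hagree
        exact ⟨r, hr, hpref⟩
    constructor
    · have : F x = hne.some := by simp only [hFdef]; rw [dif_pos hx, dif_pos hne]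
      rw [this]; exact hne.some_mem.1
    · have : F x = hne.some := by simp only [hFdef]; rw [dif_pos hx, dif_pos hne]
      rw [this]; exact hne.some_mem.2
  apply hdisc
  refine ⟨F, ?_, ?_⟩
  · -- continuity on S
    intro x hxS
    by_cases hxeq : x = a
    · rw [hxeq]
      apply cwa_baire
      intro M
      refine ⟨Nm M, ?_⟩
      intro y hyS hyagree j hj
      by_cases hy : y = a
      · subst hy; rfl
      · have hyr : ∃ n, aseq n = y := by
          rcases hyS with h | h
          · exact h
          · exact absurd h hy
        have hx := hxa y hy
        have hMlt : M < Nat.find hx := by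
          rw [Nat.lt_find_iff]
          intro m hm
          exact not_not_intro (fun i hi => hyagree i (lt_of_lt_of_le hi (hNmono hm)))
        have := (hFx y hy hyr hx).2 j (by omega)
        rw [this, hFa]
    · -- isolated point
      obtain ⟨k, hk⟩ := Function.ne_iff.mp hxeq
      have hev : aseq ⁻¹' {y | ∀ i < k + 1, y i = a i} ∈ Filter.atTop :=
        hconv (cylMemNhds a (k + 1))
      obtain ⟨n1, hn1⟩ := Filter.mem_atTop_sets.mp hev
      have hdiffs : ∀ n, ∃ dn, aseq n ≠ x → aseq n dn ≠ x dn := by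
        intro n
        by_cases h : aseq n = x
        · exact ⟨0, fun hc => absurd h hc⟩
        · obtain ⟨d, hd⟩ := Function.ne_iff.mp h
          exact ⟨d, fun _ => hd⟩
      choose dn hdn using hdiffs
      set T := (k + 1) + ((Finset.range n1).sup fun n => dn n + 1) with hTdef
      apply cwa_baire
      intro M
      refine ⟨T, ?_⟩
      intro y hyS hyagree j hj
      have hyx : y = x := by
        rcases hyS with ⟨n, rfl⟩ | hy
        · by_contra hne
          rcases lt_or_ge n n1 with hlt | hge
          · have hd : aseq n (dn n) ≠ x (dn n) := hdn n hne
            have hdT : dn n + 1 ≤ (Finset.range n1).sup fun n => dn n + 1 :=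
              Finset.le_sup (f := fun n => dn n + 1) (Finset.mem_range.mpr hlt)
            exact hd (hyagree (dn n) (by omega))
          · have h2 : aseq n k = a k := hn1 n hge k (by omega)
            have h3 : aseq n k = x k := hyagree k (by omega)
            exact hk (h3 ▸ h2 ▸ rfl)
        · have hya : y = a := hy
          subst hya
          exact absurd ((hyagree k (by omega)).symm) (by simpa using hk)
      rw [hyx]
  · -- choice property
    intro x hxS
    by_cases hx : x = a
    · subst hx; rw [hFa]; exact hq
    · rcases hyS : hxS with ⟨n, rfl⟩ | h
      · exact (hFx _ hx ⟨n, rfl⟩ (hxa _ hx)).1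
      · exact absurd h hx


theorem accn_red_of_discOnSeq (f : (ℕ → ℕ) → Set (ℕ → ℕ)) (a : ℕ → ℕ)
    (aseq : ℕ → (ℕ → ℕ))
    (hconv : Filter.Tendsto aseq Filter.atTop (nhds a))
    (ha : a ∈ domP f) (han : ∀ n, aseq n ∈ domP f)
    (hdisc : ¬ ∃ F : (ℕ → ℕ) → (ℕ → ℕ),
        ContinuousOn F (Set.range aseq ∪ {a}) ∧
        ∀ x ∈ Set.range aseq ∪ {a}, F x ∈ f x) :
    RedFO ACCN f := by
  classical
  have hKey := key_lemma f a aseq hconv ha han hdisc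
  refine ⟨HH f a aseq, KK f a aseq, ?_, ?_, ?_, ?_⟩
  · -- continuity of H
    intro p0 _
    apply cwa_baire
    intro M
    by_cases h0 : ∃ t, p0 t ≠ 0
    · refine ⟨Nat.find h0 + M + 1, ?_⟩
      intro p _ hpa j _
      have hfind : ∃ t, p t ≠ 0 :=
        ⟨Nat.find h0, by rw [hpa (Nat.find h0) (by omega)]; exact Nat.find_spec h0⟩
      have heq : Nat.find hfind = Nat.find h0 := by
        rw [Nat.find_eq_iff]
        constructor
        · rw [hpa (Nat.find h0) (by omega)]; exact Nat.find_spec h0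
        · intro k hk
          rw [not_not, hpa k (by omega)]
          exact not_not.mp (Nat.find_min h0 hk)
      have : HH f a aseq p = HH f a aseq p0 := by
        unfold HH
        rw [dif_pos hfind, dif_pos h0, heq, hpa (Nat.find h0) (by omega)]
      rw [this]
    · refine ⟨M, ?_⟩
      intro p _ hpa j hj
      have hH0 : HH f a aseq p0 = a := by unfold HH; rw [dif_neg h0]
      by_cases h1 : ∃ t, p t ≠ 0
      · have hM : M ≤ Nat.find h1 := by
          by_contra hc
          push_neg at hc
          have : p (Nat.find h1) = p0 (Nat.find h1) := hpa _ hc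
          have h2 := Nat.find_spec h1
          push_neg at h0
          rw [this] at h2
          exact h2 (h0 _)
        have : HH f a aseq p = pickX f a aseq (Nat.find h1) (p (Nat.find h1) - 1) := by
          unfold HH; rw [dif_pos h1]
        rw [this, hH0]
        exact pickX_agree f a aseq _ _ j (by omega)
      · have : HH f a aseq p = a := by unfold HH; rw [dif_neg h1]
        rw [this, hH0]
  · -- continuity of K
    rintro ⟨p0, q0⟩ hw0
    obtain ⟨hp0dom, hq0⟩ := hw0
    have hEx : ∃ m, PbL f a aseq (encP q0 m) ∨ ∃ t, t < m ∧ p0 t ≠ 0 := by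
      by_cases h0 : ∃ t, p0 t ≠ 0
      · exact ⟨Nat.find h0 + 1, Or.inr ⟨Nat.find h0, by omega, Nat.find_spec h0⟩⟩
      · have hHa : HH f a aseq p0 = a := by unfold HH; rw [dif_neg h0]
        rw [hHa] at hq0
        obtain ⟨m, hm⟩ := hKey q0 hq0
        exact ⟨m, Or.inl (PbL_encP.mpr hm)⟩
    set m0 := Nat.find hEx with hm0def
    apply cwa_nat
    refine ⟨m0, ?_⟩
    rintro ⟨p, q⟩ hw1 hw2
    simp only at hw1 hw2
    have hencEq : ∀ m ≤ m0, encP q m = encP q0 m := fun m hm =>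
      encP_congr (fun i hi => hw2 i (by omega))
    have hcondIff : ∀ m ≤ m0,
        ((PbL f a aseq (encP q m) ∨ ∃ t, t < m ∧ p t ≠ 0) ↔
          (PbL f a aseq (encP q0 m) ∨ ∃ t, t < m ∧ p0 t ≠ 0)) := by
      intro m hm
      rw [hencEq m hm]
      apply or_congr_right
      constructor
      · rintro ⟨t, ht, hne⟩; exact ⟨t, ht, by rwa [← hw1 t (by omega)]⟩
      · rintro ⟨t, ht, hne⟩; exact ⟨t, ht, by rwa [hw1 t (by omega)]⟩
    have hEx' : ∃ m, PbL f a aseq (encP q m) ∨ ∃ t, t < m ∧ p t ≠ 0 :=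
      ⟨m0, (hcondIff m0 le_rfl).mpr (Nat.find_spec hEx)⟩
    have hfind' : Nat.find hEx' = m0 := by
      rw [Nat.find_eq_iff]
      refine ⟨(hcondIff m0 le_rfl).mpr (Nat.find_spec hEx), fun k hk hc => ?_⟩
      exact Nat.find_min hEx hk ((hcondIff k (le_of_lt hk)).mp hc)
    show KK f a aseq (p, q) = KK f a aseq (p0, q0)
    unfold KK
    dsimp only
    rw [dif_pos hEx', dif_pos hEx, hfind', ← hm0def, hencEq m0 le_rfl]
    by_cases hPb : PbL f a aseq (encP q0 m0)
    · rw [if_pos hPb, if_pos hPb]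
    · rw [if_neg hPb, if_neg hPb]
      have hspec := Nat.find_spec hEx
      rw [← hm0def] at hspec
      have h2' : ∃ t, t < m0 ∧ p0 t ≠ 0 := hspec.resolve_left hPb
      obtain ⟨t1', ht1'm, ht1'⟩ := h2'
      have hp0 : ∃ t, p0 t ≠ 0 := ⟨t1', ht1'⟩
      have hp : ∃ t, p t ≠ 0 := ⟨t1', by rwa [hw1 t1' (by omega)]⟩
      rw [dif_pos hp, dif_pos hp0]
      have htlt : Nat.find hp0 < m0 := lt_of_le_of_lt (Nat.find_min' hp0 ht1') ht1'm
      have heqf : Nat.find hp = Nat.find hp0 := by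
        rw [Nat.find_eq_iff]
        constructor
        · rw [hw1 _ (by omega)]; exact Nat.find_spec hp0
        · intro k hk
          rw [not_not, hw1 k (by omega)]
          exact not_not.mp (Nat.find_min hp0 hk)
      rw [heqf]
      exact hw1 _ (by omega)
  · -- H maps into dom f
    intro p _
    show f (HH f a aseq p) ≠ ∅
    unfold HH
    split_ifs with h
    · exact pickX_mem ha han _ _
    · exact ha
  · -- correctness
    intro p hp q hq
    have hc1 : ∀ i j, p i ≠ 0 → p j ≠ 0 → p i = p j := mem_domFO_ACCN.mp hp
    refine ⟨hc1, ?_⟩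
    by_cases h0 : ∃ t, p t ≠ 0
    · have hHp : HH f a aseq p = pickX f a aseq (Nat.find h0) (p (Nat.find h0) - 1) := by
        unfold HH; rw [dif_pos h0]
      rw [hHp] at hq
      have hv : p (Nat.find h0) ≠ 0 := Nat.find_spec h0
      have hEx : ∃ m, PbL f a aseq (encP q m) ∨ ∃ t', t' < m ∧ p t' ≠ 0 :=
        ⟨Nat.find h0 + 1, Or.inr ⟨Nat.find h0, by omega, hv⟩⟩
      intro k
      show p k ≠ KK f a aseq (p, q) + 1
      unfold KK
      dsimp only
      rw [dif_pos hEx]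
      by_cases hPb : PbL f a aseq (encP q (Nat.find hEx))
      · rw [if_pos hPb]
        intro hk
        have hpk : p k ≠ 0 := by omega
        have hkv : p k = p (Nat.find h0) := hc1 k (Nat.find h0) hpk hv
        have hcv : p (Nat.find h0) - 1 = encP q (Nat.find hEx) := by omega
        have hsp := pickX_spec (t := Nat.find h0) (f := f) (a := a) (aseq := aseq)
          (c := p (Nat.find h0) - 1) (by rw [hcv]; exact hPb) q hq
        obtain ⟨i, hi, hne⟩ := hsp
        rw [hcv, lenOf_encP] at hi
        rw [hcv, valOf_encP q hi] at hne
        exact hne rfl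
      · rw [if_neg hPb, dif_pos h0]
        intro hk
        have hpk : p k ≠ 0 := by omega
        have h2 := hc1 k (Nat.find h0) hpk hv
        omega
    · push_neg at h0
      intro k
      rw [h0 k]
      omega
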